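/- (Expansion lemma, equation (2.5)) Let a, b be odd positive integers, h ∈ ℤ, r ≥ 1, n ≥ 0, x real, and define S_{n,i,q}^{(h,r)}(a) = \sum_{j_1,...,j_r=0}^{a-1} (-1)^{j_1+...+j_r} q^{\sum_{l=1}^r (h+n-l-i+1) j_l} [j_1+...+j_r]_q^i. Then \sum_{j_1,...,j_r=0}^{a-1} (-1)^{j_1+...+j_r} q^{b\sum_{l=1}^r (h-l+1) j_l} E_{n,q^a}^{(h,r)}\left(bx + \frac{b(j_1+...+j_r)}{a}\right) = \sum_{i=0}^{n} \binom{n}{i} \left(\frac{[b]_q}{[a]_q}\right)^i E_{n-i,q^a}^{(h,r)}(bx) \, S_{n,i,q^b}^{(h,r)}(a). -/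

import Mathlib

noncomputable def qnum (q x : ℝ) : ℝ := (1 - q ^ x) / (1 - q)

/-- The q-number of a natural number: `[a]_q = (1-q^a)/(1-q)`. -/
noncomputable def qnat (q : ℝ) (a : ℕ) : ℝ := (1 - q ^ a) / (1 - q)

/-- The (h,q)-extension of higher-order Euler polynomials, by the finite closed formula. -/
noncomputable def qE (q : ℝ) (h : ℤ) (r n : ℕ) (x : ℝ) : ℝ :=
  (1 + q) ^ r / (1 - q) ^ n *
    ∑ l ∈ Finset.range (n + 1), (n.choose l : ℝ) * (-(q ^ x)) ^ l /
      ∏ j ∈ Finset.range r, (1 + q ^ (h - r + l + 1 + j))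

/-- `S_{n,i,q}^{(h,r)}(a) = ∑_{j_1,…,j_r=0}^{a-1} (-1)^{j_1+⋯+j_r}
q^{∑_{l=1}^r (h+n-l-i+1) j_l} [j_1+⋯+j_r]_q^i`. -/
noncomputable def qS (q : ℝ) (h : ℤ) (r n i a : ℕ) : ℝ :=
  ∑ j : Fin r → Fin a,
    (-1 : ℝ) ^ (∑ l, (j l : ℕ)) *
      q ^ (∑ l : Fin r, (h + n - (l : ℕ) - i) * (j l : ℤ)) *
      (qnat q (∑ l, (j l : ℕ))) ^ i

lemma choose_tri {n i m : ℕ} (hnm : i + m ≤ n) :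
    n.choose i * (n - i).choose m = n.choose m * (n - m).choose i := by
  have h1 := Nat.choose_mul (n := n) (show i ≤ i + m by omega)
  have h2 := Nat.choose_mul (n := n) (show m ≤ i + m by omega)
  rw [Nat.add_sub_cancel_left] at h1
  rw [Nat.add_sub_cancel] at h2
  have h3 : (i + m).choose i = (i + m).choose m := by
    have := Nat.choose_symm (show m ≤ i + m by omega)
    rwa [Nat.add_sub_cancel] at this
  rw [← h1, ← h2, h3]

lemma key (n : ℕ) (u v : ℝ) (D : ℕ → ℝ) :
    ∑ l ∈ Finset.range (n+1), (n.choose l : ℝ) * (u*v)^l / D l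
    = ∑ i ∈ Finset.range (n+1), (n.choose i : ℝ) * (1-u)^i * u^(n-i) *
        ∑ m ∈ Finset.range (n-i+1), ((n-i).choose m : ℝ) * v^m / D m := by
  have hext : ∀ i ∈ Finset.range (n+1),
      (n.choose i : ℝ) * (1-u)^i * u^(n-i) *
        ∑ m ∈ Finset.range (n-i+1), ((n-i).choose m : ℝ) * v^m / D m
      = ∑ m ∈ Finset.range (n+1),
          (n.choose i : ℝ) * (1-u)^i * u^(n-i) * (((n-i).choose m : ℝ) * v^m / D m) := by
    intro i hi
    rw [Finset.mul_sum]
    apply Finset.sum_subset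
    · intro m hm; simp only [Finset.mem_range] at *; omega
    · intro m hm hm2
      simp only [Finset.mem_range] at hm hm2
      rw [Nat.choose_eq_zero_of_lt (show n - i < m by omega)]
      simp
  rw [Finset.sum_congr rfl hext, Finset.sum_comm]
  apply Finset.sum_congr rfl
  intro m hm
  simp only [Finset.mem_range] at hm
  have hmn : m ≤ n := by omega
  rw [show (∑ i ∈ Finset.range (n+1),
      (n.choose i : ℝ) * (1-u)^i * u^(n-i) * (((n-i).choose m : ℝ) * v^m / D m))
      = ∑ i ∈ Finset.range (n-m+1),
      (n.choose i : ℝ) * (1-u)^i * u^(n-i) * (((n-i).choose m : ℝ) * v^m / D m) from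
    (Finset.sum_subset (by intro i hi; simp only [Finset.mem_range] at *; omega)
      (by intro i hi hi2; simp only [Finset.mem_range] at hi hi2
          rw [Nat.choose_eq_zero_of_lt (show n - i < m by omega)]; simp)).symm]
  have hstep : ∀ i ∈ Finset.range (n-m+1),
      (n.choose i : ℝ) * (1-u)^i * u^(n-i) * (((n-i).choose m : ℝ) * v^m / D m)
      = ((n.choose m : ℝ) * v^m * u^m / D m) * ((1-u)^i * u^(n-m-i) * ((n-m).choose i : ℝ)) := by
    intro i hi
    simp only [Finset.mem_range] at hi
    have him : i + m ≤ n := by omega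
    have hc : (n.choose i : ℝ) * ((n-i).choose m : ℝ)
        = (n.choose m : ℝ) * ((n-m).choose i : ℝ) := by
      rw [← Nat.cast_mul, ← Nat.cast_mul, choose_tri him]
    have hu : u^(n-i) = u^m * u^(n-m-i) := by
      rw [← pow_add]; congr 1; omega
    rw [hu]
    simp only [div_eq_mul_inv]
    linear_combination ((1-u)^i * u^m * u^(n-m-i) * v^m * (D m)⁻¹) * hc
  rw [Finset.sum_congr rfl hstep, ← Finset.mul_sum]
  have hsum1 : ∑ i ∈ Finset.range (n-m+1), (1-u)^i * u^(n-m-i) * ((n-m).choose i : ℝ) = 1 := by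
    rw [← add_pow (1-u) u (n-m)]
    simp
  rw [hsum1, mul_one, mul_pow]
  ring

lemma hQpow (q : ℝ) (hq0 : 0 < q) (a b J : ℕ) (ha : 0 < a) (x : ℝ) :
    ((q^a : ℝ)) ^ ((b:ℝ)*x + (b:ℝ)*(J:ℝ)/(a:ℝ)) = ((q^a : ℝ)) ^ ((b:ℝ)*x) * ((q^b)^J) := by
  have hQ : (0:ℝ) < q^a := pow_pos hq0 a
  rw [Real.rpow_add hQ]
  congr 1
  rw [← Real.rpow_natCast q a, ← Real.rpow_mul hq0.le]
  have hc : (a:ℝ)*((b:ℝ)*(J:ℝ)/(a:ℝ)) = ((b*J : ℕ):ℝ) := by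
    have : (a:ℝ) ≠ 0 := Nat.cast_ne_zero.mpr ha.ne'
    push_cast
    field_simp
  rw [hc, Real.rpow_natCast, pow_mul]

lemma core (q : ℝ) (hq0 : 0 < q) (hq1 : q < 1) (r : ℕ) (h : ℤ) (n J a b : ℕ)
    (ha : 0 < a) (hb : 0 < b) (x : ℝ) :
    qE (q^a) h r n ((b:ℝ)*x + (b:ℝ)*(J:ℝ)/(a:ℝ))
    = ∑ i ∈ Finset.range (n+1), (n.choose i : ℝ) * ((1-q^b)/(1-q^a))^i *
        qE (q^a) h r (n-i) ((b:ℝ)*x) * ((q^b)^J)^(n-i) * (qnat (q^b) J)^i := by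
  have hQ1 : q^a < 1 := pow_lt_one₀ hq0.le hq1 ha.ne'
  have hQ0 : (0:ℝ) < q^a := pow_pos hq0 a
  have h1Q : (1:ℝ) - q^a ≠ 0 := sub_ne_zero.mpr (ne_of_gt (by linarith))
  have hb1 : q^b < 1 := pow_lt_one₀ hq0.le hq1 hb.ne'
  have h1b : (1:ℝ) - q^b ≠ 0 := sub_ne_zero.mpr (ne_of_gt (by linarith))
  have h1u : (1:ℝ) - (q^b)^J = (1 - q^b) * qnat (q^b) J := by
    unfold qnat; field_simp
  unfold qE
  rw [hQpow q hq0 a b J ha x]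
  rw [show (∑ l ∈ Finset.range (n+1), (n.choose l : ℝ) *
        (-(((q^a:ℝ)) ^ ((b:ℝ)*x) * ((q^b)^J))) ^ l /
        ∏ j ∈ Finset.range r, (1 + (q^a:ℝ) ^ (h - r + l + 1 + j)))
      = ∑ l ∈ Finset.range (n+1), (n.choose l : ℝ) *
        (((q^b)^J) * (-(((q^a:ℝ)) ^ ((b:ℝ)*x)))) ^ l /
        ∏ j ∈ Finset.range r, (1 + (q^a:ℝ) ^ (h - r + l + 1 + j)) from
    Finset.sum_congr rfl (fun l _ => by rw [show (-(((q^a:ℝ)) ^ ((b:ℝ)*x) * ((q^b)^J)))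
      = (((q^b)^J) * (-(((q^a:ℝ)) ^ ((b:ℝ)*x)))) by ring])]
  rw [key n ((q^b)^J) (-(((q^a:ℝ)) ^ ((b:ℝ)*x)))
    (fun l => ∏ j ∈ Finset.range r, (1 + (q^a:ℝ) ^ (h - r + l + 1 + j)))]
  rw [Finset.mul_sum]
  apply Finset.sum_congr rfl
  intro i hi
  simp only [Finset.mem_range] at hi
  have hin : i ≤ n := by omega
  rw [h1u, mul_pow]
  have hpow : ((1:ℝ) - q^a)^n = (1-q^a)^(n-i) * (1-q^a)^i := by
    rw [← pow_add]; congr 1; omega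
  rw [hpow]
  have hne1 : ((1:ℝ)-q^a)^(n-i) ≠ 0 := pow_ne_zero _ h1Q
  have hne2 : ((1:ℝ)-q^a)^i ≠ 0 := pow_ne_zero _ h1Q
  rw [div_pow]
  field_simp

theorem qE_expansion (q : ℝ) (hq0 : 0 < q) (hq1 : q < 1) (r : ℕ) (hr : 0 < r)
    (h : ℤ) (n : ℕ) (x : ℝ)
    (a b : ℕ) (ha : 0 < a) (hb : 0 < b) (haodd : Odd a) (hbodd : Odd b) :
    ∑ j : Fin r → Fin a,
        (-1 : ℝ) ^ (∑ l, (j l : ℕ)) *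
          q ^ ((b : ℤ) * ∑ l : Fin r, (h - (l : ℕ)) * (j l : ℤ)) *
          qE (q ^ a) h r n ((b : ℝ) * x + (b : ℝ) * (∑ l, (j l : ℕ) : ℕ) / a) =
      ∑ i ∈ Finset.range (n + 1),
        (n.choose i : ℝ) * (qnat q b / qnat q a) ^ i * qE (q ^ a) h r (n - i) ((b : ℝ) * x) *
          qS (q ^ b) h r n i a := by
  have hQ1 : q^a < 1 := pow_lt_one₀ hq0.le hq1 ha.ne'
  have hb1 : q^b < 1 := pow_lt_one₀ hq0.le hq1 hb.ne'
  have h1q : (1:ℝ) - q ≠ 0 := sub_ne_zero.mpr (ne_of_gt (by linarith))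
  have h1Q : (1:ℝ) - q^a ≠ 0 := sub_ne_zero.mpr (ne_of_gt (by linarith))
  have hdiv : qnat q b / qnat q a = (1-q^b)/(1-q^a) := by
    unfold qnat; rw [div_div_div_comm]; field_simp
  conv_rhs => simp only [qS, Finset.mul_sum]
  rw [Finset.sum_comm]
  apply Finset.sum_congr rfl
  intro j _
  rw [core q hq0 hq1 r h n (∑ l, (j l : ℕ)) a b ha hb x, Finset.mul_sum]
  apply Finset.sum_congr rfl
  intro i hi
  simp only [Finset.mem_range] at hi
  have hin : i ≤ n := by omega
  rw [hdiv]
  have hbne : (q:ℝ)^b ≠ 0 := pow_ne_zero _ hq0.ne'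
  have hexp : (∑ l : Fin r, (h + (n:ℤ) - ((l:ℕ):ℤ) - (i:ℤ)) * ((j l : ℕ):ℤ))
      = (∑ l : Fin r, (h - ((l:ℕ):ℤ)) * ((j l : ℕ):ℤ))
        + ((n:ℤ) - (i:ℤ)) * ((∑ l, (j l : ℕ) : ℕ):ℤ) := by
    push_cast
    rw [Finset.mul_sum, ← Finset.sum_add_distrib]
    apply Finset.sum_congr rfl
    intro l _
    ring
  rw [hexp, zpow_add₀ hbne]
  have hz1 : (q^b : ℝ) ^ (∑ l : Fin r, (h - ((l:ℕ):ℤ)) * ((j l : ℕ):ℤ))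
      = q ^ ((b : ℤ) * ∑ l : Fin r, (h - ((l:ℕ):ℤ)) * ((j l : ℕ):ℤ)) := by
    rw [zpow_mul, zpow_natCast]
  have hz2 : (q^b : ℝ) ^ (((n:ℤ) - (i:ℤ)) * ((∑ l, (j l : ℕ) : ℕ):ℤ))
      = ((q^b) ^ (∑ l, (j l : ℕ)) : ℝ) ^ (n - i) := by
    have hni : (n:ℤ) - (i:ℤ) = ((n - i : ℕ):ℤ) := by omega
    rw [hni, show ((n - i : ℕ):ℤ) * ((∑ l, (j l : ℕ) : ℕ):ℤ)
        = (((n - i) * (∑ l, (j l : ℕ)) : ℕ):ℤ) by push_cast; ring,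
      zpow_natCast, mul_comm (n-i), pow_mul]
  rw [hz1, hz2]
  ring
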